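/- Let N be a finite index set of RUs with parameters kₙ > 0 and generation levels Eₙ, let pg > 0 and Ereq be real. Then for every p > 0 the reduced SFC cost function J̃(p) = p · Σₙ (Eₙ − (kₙ/p − 1)) + (Ereq − Σₙ (Eₙ − (kₙ/p − 1))) · pg is twice differentiable at p with second derivative equal to 2 · pg · (Σₙ kₙ) / p³, which is strictly positive whenever Σₙ kₙ > 0. -/

import Mathlib

/-- For every `p > 0`, the reduced SFC cost function is twice differentiable at `p`
with second derivative `2·pg·(Σₙ kₙ)/p³`, which is strictly positive whenever
`Σₙ kₙ > 0`. -/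
theorem sfc_cost_second_derivative {ι : Type*} (N : Finset ι) (k E : ι → ℝ)
    (hk : ∀ n ∈ N, 0 < k n) (pg : ℝ) (hpg : 0 < pg) (Ereq : ℝ)
    (p : ℝ) (hp : 0 < p) :
    DifferentiableAt ℝ
      (fun q : ℝ => q * ∑ n ∈ N, (E n - (k n / q - 1)) +
        (Ereq - ∑ n ∈ N, (E n - (k n / q - 1))) * pg) p ∧
    DifferentiableAt ℝ
      (deriv (fun q : ℝ => q * ∑ n ∈ N, (E n - (k n / q - 1)) +
        (Ereq - ∑ n ∈ N, (E n - (k n / q - 1))) * pg)) p ∧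
    deriv (deriv (fun q : ℝ => q * ∑ n ∈ N, (E n - (k n / q - 1)) +
        (Ereq - ∑ n ∈ N, (E n - (k n / q - 1))) * pg)) p =
      2 * pg * (∑ n ∈ N, k n) / p ^ 3 ∧
    (0 < ∑ n ∈ N, k n →
      0 < deriv (deriv (fun q : ℝ => q * ∑ n ∈ N, (E n - (k n / q - 1)) +
        (Ereq - ∑ n ∈ N, (E n - (k n / q - 1))) * pg)) p) := by
  have hsum : ∀ q : ℝ, ∑ n ∈ N, (E n - (k n / q - 1))
      = (∑ n ∈ N, (E n + 1)) - (∑ n ∈ N, k n) / q := by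
    intro q
    rw [Finset.sum_div, ← Finset.sum_sub_distrib]
    exact Finset.sum_congr rfl (fun n _ => by ring)
  set A : ℝ := ∑ n ∈ N, (E n + 1) with hA
  set K : ℝ := ∑ n ∈ N, k n with hK
  have hf : (fun q : ℝ => q * ∑ n ∈ N, (E n - (k n / q - 1)) +
        (Ereq - ∑ n ∈ N, (E n - (k n / q - 1))) * pg)
      = fun q : ℝ => q * (A - K / q) + (Ereq - (A - K / q)) * pg := by
    funext q; rw [hsum]
  rw [hf]
  set f := fun q : ℝ => q * (A - K / q) + (Ereq - (A - K / q)) * pg with hfdef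
  set h := fun q : ℝ => A * q - K + (Ereq - A) * pg + pg * K * q⁻¹ with hhdef
  have hne : ∀ᶠ q in nhds p, q ≠ 0 := eventually_ne_nhds hp.ne'
  have hfh : f =ᶠ[nhds p] h := hne.mono (fun q hq => by
    simp only [hfdef, hhdef]; field_simp; ring)
  have hd1 : ∀ q : ℝ, q ≠ 0 → HasDerivAt h (A - pg * K * (q ^ 2)⁻¹) q := by
    intro q hq
    have h1 : HasDerivAt (fun q : ℝ => q⁻¹) (-(q ^ 2)⁻¹) q := hasDerivAt_inv hq
    have h2 := ((((hasDerivAt_id q).const_mul A).sub_const K).add_const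
      ((Ereq - A) * pg)).add (h1.const_mul (pg * K))
    exact h2.congr_deriv (by ring)
  have hdf : HasDerivAt f (A - pg * K * (p ^ 2)⁻¹) p :=
    (hd1 p hp.ne').congr_of_eventuallyEq hfh
  set g2 := fun q : ℝ => A - pg * K * (q ^ 2)⁻¹ with hg2def
  have hderiv : deriv f =ᶠ[nhds p] g2 :=
    hfh.deriv.trans (hne.mono fun q hq => (hd1 q hq).deriv)
  have hinv : HasDerivAt (fun q : ℝ => (q ^ 2)⁻¹)
      (-(↑2 * p ^ 1) / (p ^ 2) ^ 2) p :=
    (hasDerivAt_pow 2 p).inv (pow_ne_zero 2 hp.ne')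
  have hdg2 : HasDerivAt g2 (-(pg * K * (-(↑2 * p ^ 1) / (p ^ 2) ^ 2))) p :=
    (hinv.const_mul (pg * K)).const_sub A
  have hdiff2 : DifferentiableAt ℝ (deriv f) p :=
    (Filter.EventuallyEq.differentiableAt_iff hderiv).mpr hdg2.differentiableAt
  have heq : deriv (deriv f) p = 2 * pg * K / p ^ 3 := by
    rw [Filter.EventuallyEq.deriv_eq hderiv, hdg2.deriv]
    field_simp
  refine ⟨hdf.differentiableAt, hdiff2, heq, fun hKpos => ?_⟩
  rw [heq]
  positivity
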